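/- Let G be cyclic of order p, k of characteristic p, V a kG-module, and N ∈ k[V]^G a norm as above, so that multiplication by N maps k[V]_d isomorphically (as kG-modules) onto a direct summand of k[V]_{d+p}. If q ∈ k[V]^G and qN lies in the image of Δ^{k-1} : k[V] → k[V], then q also lies in the image of Δ^{k-1}. -/

import Mathlib

open MvPolynomial TensorProduct

/-- Index type for the variables of `k[V]` where `V = ⊕_{j<m} V_{nj j}`. -/
abbrev Idx (m : ℕ) (nj : Fin m → ℕ) := Σ j : Fin m, Fin (nj j)

/-- The action of the generator σ on `k[V]`:
`σ (x_{i,j}) = x_{i,j} + x_{i+1,j}` (and `σ` fixes the last variable of each block). -/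
noncomputable def sigmaAct (k : Type*) [CommRing k] {m : ℕ} (nj : Fin m → ℕ) :
    MvPolynomial (Idx m nj) k →ₐ[k] MvPolynomial (Idx m nj) k :=
  aeval (fun v => X v + if h : v.2.1 + 1 < nj v.1 then X ⟨v.1, ⟨v.2.1 + 1, h⟩⟩ else 0)

/-- Δ = σ - 1 as a `k`-linear endomorphism of `k[V]`. -/
noncomputable def Del (k : Type*) [CommRing k] {m : ℕ} (nj : Fin m → ℕ) :
    MvPolynomial (Idx m nj) k →ₗ[k] MvPolynomial (Idx m nj) k :=
  (sigmaAct k nj).toLinearMap - LinearMap.id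

/-- The ring of invariants `k[V]^G` (fixed points of the generator σ). -/
noncomputable def invar (k : Type*) [CommRing k] {m : ℕ} (nj : Fin m → ℕ) :
    Subalgebra k (MvPolynomial (Idx m nj) k) :=
  AlgHom.equalizer (sigmaAct k nj) (AlgHom.id k _)

/-- Matrix of σ on the indecomposable module `W = V_n` in the basis `w_1,…,w_n`,
with `σ • w_i = ∑_{j ≤ i} (-1)^{i-j} w_j`. -/
def sigmaWMat (k : Type*) [CommRing k] (n : ℕ) : Matrix (Fin n) (Fin n) k :=
  fun a b => if a ≤ b then (-1 : k) ^ ((b : ℕ) - (a : ℕ)) else 0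

/-- σ acting on `W = V_n`. -/
noncomputable def sigmaW (k : Type*) [CommRing k] (n : ℕ) : (Fin n → k) →ₗ[k] (Fin n → k) :=
  Matrix.toLin' (sigmaWMat k n)

/-- σ acting diagonally on `k[V] ⊗ W`. -/
noncomputable def sigmaCov (k : Type*) [CommRing k] {m : ℕ} (nj : Fin m → ℕ) (n : ℕ) :
    (MvPolynomial (Idx m nj) k ⊗[k] (Fin n → k)) →ₗ[k]
      (MvPolynomial (Idx m nj) k ⊗[k] (Fin n → k)) :=
  TensorProduct.map (sigmaAct k nj).toLinearMap (sigmaW k n)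

/-- A covariant is a `G`-invariant element of `k[V] ⊗ W`. -/
def IsCovariant (k : Type*) [CommRing k] {m : ℕ} (nj : Fin m → ℕ) {n : ℕ}
    (h : MvPolynomial (Idx m nj) k ⊗[k] (Fin n → k)) : Prop :=
  sigmaCov k nj n h = h

/-- Elements of `k[V] ⊗ W` which are homogeneous of degree `d`. -/
def tensorHomog (k : Type*) [CommRing k] {m : ℕ} (nj : Fin m → ℕ) (n : ℕ) (d : ℕ) :
    Set (MvPolynomial (Idx m nj) k ⊗[k] (Fin n → k)) :=
  {x | x ∈ Submodule.span k
    {y | ∃ f w, MvPolynomial.IsHomogeneous f d ∧ y = f ⊗ₜ[k] w}}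


/-- `h` is decomposable: it lies in `k[V]^G_+ ⋅ (k[V] ⊗ W)^G`. -/
def IsDecomposableCov (k : Type*) [CommRing k] {m : ℕ} (nj : Fin m → ℕ) (n : ℕ)
    (h : MvPolynomial (Idx m nj) k ⊗[k] (Fin n → k)) : Prop :=
  h ∈ Submodule.span k
    {y | ∃ q x, q ∈ invar k nj ∧ (∃ e, 0 < e ∧ MvPolynomial.IsHomogeneous q e) ∧
      IsCovariant k nj x ∧ y = q • x}

/-- A transfer covariant: `Δ^k(f) w_1 + Δ^{k+1}(f) w_2 + ⋯ + Δ^{p-1}(f) w_s`. -/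
noncomputable def transferCov (k : Type*) [CommRing k] {m : ℕ} (nj : Fin m → ℕ) (n : ℕ)
    (p s : ℕ) (f : MvPolynomial (Idx m nj) k) :
    MvPolynomial (Idx m nj) k ⊗[k] (Fin n → k) :=
  ∑ i : Fin n, (if (i : ℕ) < s then ((Del k nj) ^ (p - s + (i : ℕ))) f else 0) ⊗ₜ[k]
    Pi.single i 1

def IsTransferCovariant (k : Type*) [CommRing k] {m : ℕ} (nj : Fin m → ℕ) (n : ℕ) (p : ℕ)
    (h : MvPolynomial (Idx m nj) k ⊗[k] (Fin n → k)) : Prop :=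
  ∃ f s, 0 < s ∧ s ≤ n ∧ s ≤ p ∧ h = transferCov k nj n p s f

/-- The module of covariants is generated over `k[V]^G` in degrees ≤ d. -/
def CovGenLE (k : Type*) [CommRing k] {m : ℕ} (nj : Fin m → ℕ) (n : ℕ) (d : ℕ) : Prop :=
  ∀ x, IsCovariant k nj x → x ∈ Submodule.span k
    {y | ∃ q z, q ∈ invar k nj ∧ IsCovariant k nj z ∧
      (∃ e ≤ d, z ∈ tensorHomog k nj n e) ∧ y = q • z}

/-- `k[V]` is generated as a `k[V]^G`-module in degrees ≤ d. -/
def PolyGenLE (k : Type*) [CommRing k] {m : ℕ} (nj : Fin m → ℕ) (d : ℕ) : Prop :=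
  ∀ f : MvPolynomial (Idx m nj) k, f ∈ Submodule.span k
    {y | ∃ q g, q ∈ invar k nj ∧ (∃ e ≤ d, MvPolynomial.IsHomogeneous g e) ∧ y = q * g}

/-- `k[V]^G` is generated as a `k`-algebra in degrees ≤ d. -/
def AlgGenLE (k : Type*) [CommRing k] {m : ℕ} (nj : Fin m → ℕ) (d : ℕ) : Prop :=
  ∀ f ∈ invar k nj, f ∈ Algebra.adjoin k
    {g | g ∈ invar k nj ∧ ∃ e ≤ d, MvPolynomial.IsHomogeneous g e}

/-- Noether bound of the module of covariants over `k[V]^G`. -/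
noncomputable def betaCov (k : Type*) [CommRing k] {m : ℕ} (nj : Fin m → ℕ) (n : ℕ) : ℕ :=
  sInf {d | CovGenLE k nj n d}

noncomputable def betaPolyMod (k : Type*) [CommRing k] {m : ℕ} (nj : Fin m → ℕ) : ℕ :=
  sInf {d | PolyGenLE k nj d}

noncomputable def betaAlg (k : Type*) [CommRing k] {m : ℕ} (nj : Fin m → ℕ) : ℕ :=
  sInf {d | AlgGenLE k nj d}

/-- The norm `N_j = ∏_{i=0}^{p-1} σ^i (x_{1,j})`. -/
noncomputable def normJ (k : Type*) [CommRing k] {m : ℕ} (nj : Fin m → ℕ) (p : ℕ)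
    (j : Fin m) (h0 : 0 < nj j) : MvPolynomial (Idx m nj) k :=
  ∏ i ∈ Finset.range p, (sigmaAct k nj)^[i] (X ⟨j, ⟨0, h0⟩⟩)


section Aux

variable (k : Type*) [CommRing k] {m : ℕ} (nj : Fin m → ℕ)

/-- Evaluation sending `x_{0,j} ↦ 1` and all other variables to `0`. -/
noncomputable def evOne : MvPolynomial (Idx m nj) k →ₐ[k] k :=
  aeval (fun v => if v.2.1 = 0 then (1 : k) else 0)

lemma evOne_comp_sigma : (evOne k nj).comp (sigmaAct k nj) = evOne k nj := by
  apply MvPolynomial.algHom_ext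
  intro v
  simp only [AlgHom.comp_apply, sigmaAct, aeval_X, map_add, evOne]
  split_ifs <;> simp [aeval_X]

lemma evOne_sigma_iter (f : MvPolynomial (Idx m nj) k) (i : ℕ) :
    evOne k nj ((sigmaAct k nj)^[i] f) = evOne k nj f := by
  induction i with
  | zero => rfl
  | succ n ih =>
    rw [Function.iterate_succ_apply', ← AlgHom.comp_apply, evOne_comp_sigma, ih]

lemma del_mul_invar (N : MvPolynomial (Idx m nj) k) (hN : sigmaAct k nj N = N)
    (x : MvPolynomial (Idx m nj) k) :
    Del k nj (N * x) = N * Del k nj x := by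
  simp [Del, map_mul, hN, mul_sub]

lemma del_pow_mul_invar (N : MvPolynomial (Idx m nj) k) (hN : sigmaAct k nj N = N)
    (K : ℕ) (x : MvPolynomial (Idx m nj) k) :
    ((Del k nj) ^ K) (N * x) = N * ((Del k nj) ^ K) x := by
  induction K generalizing x with
  | zero => simp
  | succ n ih =>
    rw [pow_succ, Module.End.mul_apply, Module.End.mul_apply,
      del_mul_invar k nj N hN, ih]

lemma del_pow_mem (C : Submodule k (MvPolynomial (Idx m nj) k))
    (hCstable : ∀ g ∈ C, sigmaAct k nj g ∈ C) (K : ℕ)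
    {c : MvPolynomial (Idx m nj) k} (hc : c ∈ C) : ((Del k nj) ^ K) c ∈ C := by
  induction K with
  | zero => simpa
  | succ n ih =>
    rw [pow_succ', Module.End.mul_apply]
    have := C.sub_mem (hCstable _ ih) ih
    simpa [Del] using this

end Aux

/-- Let `N = N_j` be a norm, so that multiplication by `N` is an
injective `kG`-map whose image is a `kG`-direct summand of `k[V]` (it admits a
`G`-stable complement `C`). If `q ∈ k[V]^G` and `qN` lies in the image of
`Δ^{k-1}`, then so does `q`. -/
theorem stmt7 (p : ℕ) (hp : p.Prime) (k : Type*) [Field k] [CharP k p]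
    {m : ℕ} (nj : Fin m → ℕ) (hnj : ∀ j, 1 ≤ nj j ∧ nj j ≤ p)
    (j : Fin m)
    (N : MvPolynomial (Idx m nj) k)
    (hN : N = normJ k nj p j (by have := (hnj j).1; omega))
    (hNinv : N ∈ invar k nj)
    (C : Submodule k (MvPolynomial (Idx m nj) k))
    (hC : IsCompl (LinearMap.range (LinearMap.mulLeft k N)) C)
    (hCstable : ∀ g ∈ C, sigmaAct k nj g ∈ C)
    (q : MvPolynomial (Idx m nj) k) (hq : q ∈ invar k nj)
    (K : ℕ) (hqN : q * N ∈ LinearMap.range ((Del k nj) ^ K)) :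
    q ∈ LinearMap.range ((Del k nj) ^ K) := by
  -- N is nonzero: the evaluation `evOne` sends it to 1.
  have hσN : sigmaAct k nj N = N := hNinv
  have hNne : N ≠ 0 := by
    intro h
    have hev : evOne k nj N = 1 := by
      rw [hN, normJ, map_prod]
      have : ∀ i ∈ Finset.range p,
          evOne k nj ((sigmaAct k nj)^[i] (X (⟨j, ⟨0, by have := (hnj j).1; omega⟩⟩ : Idx m nj))) = 1 := by
        intro i _
        rw [evOne_sigma_iter]
        simp [evOne]
      rw [Finset.prod_congr rfl this]
      simp
    rw [h] at hev
    simp at hev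
  obtain ⟨f, hf⟩ := hqN
  -- decompose f = N * g + c
  obtain ⟨y, c, hy, hc, hyc⟩ := Submodule.codisjoint_iff_exists_add_eq.mp hC.codisjoint f
  obtain ⟨g, hg⟩ := hy
  have hfeq : f = N * g + c := by
    rw [← hyc, ← hg]; rfl
  have happ : q * N = N * ((Del k nj) ^ K) g + ((Del k nj) ^ K) c := by
    rw [← hf, hfeq, map_add, del_pow_mul_invar k nj N hσN]
  have hmem : N * (q - ((Del k nj) ^ K) g) ∈
      LinearMap.range (LinearMap.mulLeft k N) ⊓ C := by
    constructor
    · exact ⟨q - ((Del k nj) ^ K) g, rfl⟩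
    · have : N * (q - ((Del k nj) ^ K) g) = ((Del k nj) ^ K) c := by
        rw [mul_sub]; rw [mul_comm q N] at happ; linear_combination happ
      rw [this]
      exact del_pow_mem k nj C hCstable K hc
  rw [hC.inf_eq_bot, Submodule.mem_bot] at hmem
  have : q - ((Del k nj) ^ K) g = 0 := by
    rcases mul_eq_zero.mp hmem with h | h
    · exact absurd h hNne
    · exact h
  exact ⟨g, (sub_eq_zero.mp this).symm⟩
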